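/- arXiv:1212.3920 — 3 statements merged into one kernel-verified Lean document; each statement's English description precedes it below -/
import Mathlib

section
/- The order parameter c is differentiable on (0,∞) and satisfies the identity c′(κ) = 1 − c(κ)² − ((n−1)/κ) c(κ) for all κ > 0. -/
open MeasureTheory Real Filter

section Aux

open Set intervalIntegral

/-- General derivative-under-integral lemma for our kernels. -/
private lemma key_deriv (m : ℕ) (p : ℝ → ℝ) (hp : Continuous p) (hp1 : ∀ θ, |p θ| ≤ 1) (κ : ℝ) :
    HasDerivAt (fun x => ∫ θ in (0:ℝ)..π, p θ * Real.exp (x * Real.cos θ) * Real.sin θ ^ m)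
      (∫ θ in (0:ℝ)..π, Real.cos θ * (p θ * Real.exp (κ * Real.cos θ) * Real.sin θ ^ m)) κ := by
  have hcont : ∀ x : ℝ, Continuous fun θ => p θ * Real.exp (x * Real.cos θ) * Real.sin θ ^ m := by
    intro x; fun_prop
  have hcont' : ∀ x : ℝ, Continuous fun θ =>
      Real.cos θ * (p θ * Real.exp (x * Real.cos θ) * Real.sin θ ^ m) := by
    intro x; fun_prop
  have := (intervalIntegral.hasDerivAt_integral_of_dominated_loc_of_deriv_le
    (F := fun x θ => p θ * Real.exp (x * Real.cos θ) * Real.sin θ ^ m)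
    (F' := fun x θ => Real.cos θ * (p θ * Real.exp (x * Real.cos θ) * Real.sin θ ^ m))
    (bound := fun _ => Real.exp (|κ| + 1)) (a := 0) (b := π) (μ := volume)
    (Metric.ball_mem_nhds κ one_pos)
    (Filter.Eventually.of_forall fun x => (hcont x).aestronglyMeasurable)
    ((hcont κ).intervalIntegrable _ _)
    ((hcont' κ).aestronglyMeasurable)
    ?_ (intervalIntegrable_const) ?_)
  · exact this.2
  · refine Filter.Eventually.of_forall fun θ _ x hx => ?_
    have hx' : |x| ≤ |κ| + 1 := by
      have := abs_sub_abs_le_abs_sub x κ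
      have hb : |x - κ| < 1 := by simpa [Real.dist_eq] using hx
      linarith
    have h1 : |p θ * Real.exp (x * Real.cos θ) * Real.sin θ ^ m| ≤ Real.exp (x * Real.cos θ) := by
      rw [abs_mul, abs_mul, Real.abs_exp]
      calc |p θ| * Real.exp (x * Real.cos θ) * |Real.sin θ ^ m|
          ≤ 1 * Real.exp (x * Real.cos θ) * 1 := by
            apply mul_le_mul (mul_le_mul (hp1 θ) le_rfl (Real.exp_pos _).le (by norm_num))
            · rw [abs_pow]; exact pow_le_one₀ (abs_nonneg _) (abs_sin_le_one θ)
            · positivity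
            · positivity
        _ = Real.exp (x * Real.cos θ) := by ring
    have h2 : Real.exp (x * Real.cos θ) ≤ Real.exp (|κ| + 1) := by
      apply Real.exp_le_exp.mpr
      calc x * Real.cos θ ≤ |x * Real.cos θ| := le_abs_self _
        _ = |x| * |Real.cos θ| := abs_mul _ _
        _ ≤ (|κ| + 1) * 1 := by
            apply mul_le_mul hx' (abs_cos_le_one θ) (abs_nonneg _) (by positivity)
        _ = |κ| + 1 := by ring
    calc ‖Real.cos θ * (p θ * Real.exp (x * Real.cos θ) * Real.sin θ ^ m)‖
        = |Real.cos θ| * |p θ * Real.exp (x * Real.cos θ) * Real.sin θ ^ m| := by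
          rw [Real.norm_eq_abs, abs_mul]
      _ ≤ 1 * Real.exp (|κ| + 1) := by
          exact mul_le_mul (abs_cos_le_one θ) (h1.trans h2) (abs_nonneg _) (by norm_num)
      _ = Real.exp (|κ| + 1) := by ring
  · refine Filter.Eventually.of_forall fun θ _ x _ => ?_
    have h : HasDerivAt (fun x : ℝ => Real.exp (x * Real.cos θ))
        (Real.cos θ * Real.exp (x * Real.cos θ)) x := by
      have := ((hasDerivAt_id x).mul_const (Real.cos θ)).exp
      simpa [mul_comm] using this
    have := (h.const_mul (p θ)).mul_const (Real.sin θ ^ m)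
    exact this.congr_deriv (by ring)

private lemma B_pos (m : ℕ) (κ : ℝ) :
    0 < ∫ θ in (0:ℝ)..π, Real.exp (κ * Real.cos θ) * Real.sin θ ^ m := by
  apply intervalIntegral_pos_of_pos_on
  · exact (by fun_prop :
      Continuous fun θ => Real.exp (κ * Real.cos θ) * Real.sin θ ^ m).intervalIntegrable _ _
  · intro x hx
    have := Real.sin_pos_of_pos_of_lt_pi hx.1 hx.2
    positivity
  · exact Real.pi_pos

private lemma ibp (n : ℕ) (hn : 2 ≤ n) (κ : ℝ) :
    κ * (∫ θ in (0:ℝ)..π, Real.sin θ ^ n * Real.exp (κ * Real.cos θ)) =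
      ((n : ℝ) - 1) * ∫ θ in (0:ℝ)..π,
        Real.cos θ * Real.exp (κ * Real.cos θ) * Real.sin θ ^ (n - 2) := by
  have h1 : (1:ℕ) ≤ n - 1 := by omega
  have hderiv : ∀ θ ∈ Set.uIcc (0:ℝ) π,
      HasDerivAt (fun θ => Real.sin θ ^ (n-1) * Real.exp (κ * Real.cos θ))
        (((n:ℝ)-1) * (Real.cos θ * Real.exp (κ * Real.cos θ) * Real.sin θ ^ (n-2))
          - κ * (Real.sin θ ^ n * Real.exp (κ * Real.cos θ))) θ := by
    intro θ _
    have hs : HasDerivAt (fun θ => Real.sin θ ^ (n-1))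
        (((n:ℝ)-1) * Real.sin θ ^ (n-2) * Real.cos θ) θ := by
      have := (Real.hasDerivAt_sin θ).fun_pow (n-1)
      have h2 : n - 1 - 1 = n - 2 := by omega
      rw [h2] at this
      exact this.congr_deriv (by push_cast [Nat.cast_sub (by omega : 1 ≤ n)]; ring)
    have he : HasDerivAt (fun θ => Real.exp (κ * Real.cos θ))
        (Real.exp (κ * Real.cos θ) * (κ * (-Real.sin θ))) θ :=
      (((Real.hasDerivAt_cos θ).const_mul κ)).exp
    have := hs.fun_mul he
    have hpow : Real.sin θ ^ (n-1) * Real.sin θ = Real.sin θ ^ n := by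
      rw [← pow_succ]; congr 1; omega
    exact this.congr_deriv (by linear_combination (-(κ * Real.exp (κ * Real.cos θ))) * hpow)
  have hint : IntervalIntegrable (fun θ =>
      ((n:ℝ)-1) * (Real.cos θ * Real.exp (κ * Real.cos θ) * Real.sin θ ^ (n-2))
        - κ * (Real.sin θ ^ n * Real.exp (κ * Real.cos θ))) volume 0 π :=
    (by fun_prop : Continuous _).intervalIntegrable _ _
  have := intervalIntegral.integral_eq_sub_of_hasDerivAt hderiv hint
  rw [Real.sin_pi, Real.sin_zero, zero_pow (by omega : n - 1 ≠ 0)] at this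
  simp only [zero_mul, sub_zero, sub_self] at this
  rw [intervalIntegral.integral_sub ((by fun_prop : Continuous _).intervalIntegrable _ _)
    ((by fun_prop : Continuous _).intervalIntegrable _ _),
    intervalIntegral.integral_const_mul, intervalIntegral.integral_const_mul] at this
  linarith

end Aux

/-- The order parameter `c(κ)` of the von Mises distribution in dimension `n`. -/
noncomputable def orderParam (n : ℕ) (κ : ℝ) : ℝ :=
  (∫ θ in (0:ℝ)..π, Real.cos θ * Real.exp (κ * Real.cos θ) * Real.sin θ ^ (n - 2)) /
  (∫ θ in (0:ℝ)..π, Real.exp (κ * Real.cos θ) * Real.sin θ ^ (n - 2))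

/-- The order parameter is differentiable on `(0,∞)` with
`c'(κ) = 1 - c(κ)² - ((n-1)/κ) c(κ)`. -/
theorem orderParam_hasDerivAt (n : ℕ) (hn : 2 ≤ n) (κ : ℝ) (hκ : 0 < κ) :
    HasDerivAt (orderParam n)
      (1 - orderParam n κ ^ 2 - (((n : ℝ) - 1) / κ) * orderParam n κ) κ := by
  set A : ℝ → ℝ := fun x =>
    ∫ θ in (0:ℝ)..π, Real.cos θ * Real.exp (x * Real.cos θ) * Real.sin θ ^ (n - 2) with hAdef
  set B : ℝ → ℝ := fun x =>
    ∫ θ in (0:ℝ)..π, Real.exp (x * Real.cos θ) * Real.sin θ ^ (n - 2) with hBdef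
  have hBpos : 0 < B κ := B_pos (n - 2) κ
  have hBne : B κ ≠ 0 := hBpos.ne'
  -- derivative of B is A κ
  have hB : HasDerivAt B (A κ) κ := by
    have := key_deriv (n - 2) (fun _ => 1) continuous_const (fun θ => by norm_num) κ
    simp only [one_mul, ← mul_assoc] at this
    exact this
  -- derivative of A is C
  have hA : HasDerivAt A (∫ θ in (0:ℝ)..π,
      Real.cos θ * (Real.cos θ * Real.exp (κ * Real.cos θ) * Real.sin θ ^ (n - 2))) κ :=
    key_deriv (n - 2) Real.cos Real.continuous_cos (fun θ => Real.abs_cos_le_one θ) κ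
  set C : ℝ := ∫ θ in (0:ℝ)..π,
      Real.cos θ * (Real.cos θ * Real.exp (κ * Real.cos θ) * Real.sin θ ^ (n - 2)) with hCdef
  -- the key identity C = B κ - ((n-1)/κ) * A κ
  have hC : C = B κ - (((n:ℝ) - 1) / κ) * A κ := by
    have hsplit : ∀ θ : ℝ, Real.cos θ * (Real.cos θ * Real.exp (κ * Real.cos θ) *
        Real.sin θ ^ (n - 2)) = Real.exp (κ * Real.cos θ) * Real.sin θ ^ (n - 2)
          - Real.sin θ ^ n * Real.exp (κ * Real.cos θ) := by
      intro θ
      have h2 : Real.sin θ ^ n = Real.sin θ ^ 2 * Real.sin θ ^ (n - 2) := by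
        rw [← pow_add]; congr 1; omega
      have hpy : Real.cos θ ^ 2 = 1 - Real.sin θ ^ 2 := by
        have := Real.sin_sq_add_cos_sq θ; linarith
      rw [h2]
      linear_combination (Real.exp (κ * Real.cos θ) * Real.sin θ ^ (n - 2)) * hpy
    have : C = (∫ θ in (0:ℝ)..π, Real.exp (κ * Real.cos θ) * Real.sin θ ^ (n - 2))
        - ∫ θ in (0:ℝ)..π, Real.sin θ ^ n * Real.exp (κ * Real.cos θ) := by
      rw [hCdef, ← intervalIntegral.integral_sub
        ((by fun_prop : Continuous _).intervalIntegrable _ _)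
        ((by fun_prop : Continuous _).intervalIntegrable _ _)]
      exact intervalIntegral.integral_congr fun θ _ => hsplit θ
    rw [this]
    have hibp : κ * (∫ θ in (0:ℝ)..π, Real.sin θ ^ n * Real.exp (κ * Real.cos θ))
        = ((n:ℝ) - 1) * A κ := ibp n hn κ
    have hS : (∫ θ in (0:ℝ)..π, Real.sin θ ^ n * Real.exp (κ * Real.cos θ))
        = (((n:ℝ) - 1) / κ) * A κ := by
      rw [div_mul_eq_mul_div, eq_div_iff hκ.ne']
      linarith [hibp]
    rw [hS]
  have hdiv : HasDerivAt (fun x => A x / B x)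
      ((C * B κ - A κ * A κ) / B κ ^ 2) κ := hA.div hB hBne
  have heq : orderParam n = fun x => A x / B x := rfl
  rw [heq]
  convert hdiv using 1
  show 1 - (A κ / B κ) ^ 2 - (((n:ℝ) - 1) / κ) * (A κ / B κ) = (C * B κ - A κ * A κ) / B κ ^ 2
  rw [hC]
  field_simp
  ring
end

section
/- The ratio c(κ)/σ(κ) satisfies lim_{κ→0⁺} c(κ)/σ(κ) = 1/ρ_c and lim_{κ→κ_max⁻} c(κ)/σ(κ) = 0. -/
open MeasureTheory Real Filter

private lemma aux_S_pos (m : ℕ) : (0:ℝ) < ∫ θ in (0:ℝ)..π, Real.sin θ ^ m := by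
  apply intervalIntegral.intervalIntegral_pos_of_pos_on
  · exact (by fun_prop : Continuous fun θ : ℝ => Real.sin θ ^ m).intervalIntegrable 0 π
  · intro x hx
    exact pow_pos (Real.sin_pos_of_pos_of_lt_pi hx.1 hx.2) m
  · exact Real.pi_pos

private lemma aux_cos_sin (m : ℕ) : (∫ θ in (0:ℝ)..π, Real.cos θ * Real.sin θ ^ m) = 0 := by
  have h2 := integral_sin_pow_mul_cos_pow_odd (a := 0) (b := π) m 0
  simp at h2
  rw [show (∫ θ in (0:ℝ)..π, Real.cos θ * Real.sin θ ^ m)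
      = ∫ x in (0:ℝ)..π, Real.sin x ^ m * Real.cos x from
    intervalIntegral.integral_congr (fun x _ => by ring), h2]

private lemma aux_cos_sq_sin (m : ℕ) : (∫ θ in (0:ℝ)..π, Real.cos θ ^ 2 * Real.sin θ ^ m)
    = (∫ θ in (0:ℝ)..π, Real.sin θ ^ m) / (m + 2) := by
  have key := integral_sin_pow (a := 0) (b := π) m
  have hcg : ∀ θ ∈ Set.uIcc (0:ℝ) π, Real.cos θ ^ 2 * Real.sin θ ^ m
      = Real.sin θ ^ m - Real.sin θ ^ (m + 2) := by
    intro θ _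
    have hc : Real.cos θ ^ 2 = 1 - Real.sin θ ^ 2 := by
      nlinarith [Real.sin_sq_add_cos_sq θ]
    rw [hc, pow_add]; ring
  rw [intervalIntegral.integral_congr hcg, intervalIntegral.integral_sub
    ((by fun_prop : Continuous fun θ : ℝ => Real.sin θ ^ m).intervalIntegrable 0 π)
    ((by fun_prop : Continuous fun θ : ℝ => Real.sin θ ^ (m+2)).intervalIntegrable 0 π), key]
  simp [Real.sin_pi]
  have : ((m:ℝ) + 2) ≠ 0 := by positivity
  field_simp
  ring

private lemma aux_D_pos (m : ℕ) (κ : ℝ) :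
    (0:ℝ) < ∫ θ in (0:ℝ)..π, Real.exp (κ * Real.cos θ) * Real.sin θ ^ m := by
  apply intervalIntegral.intervalIntegral_pos_of_pos_on
  · exact (by fun_prop : Continuous fun θ : ℝ =>
      Real.exp (κ * Real.cos θ) * Real.sin θ ^ m).intervalIntegrable 0 π
  · intro x hx
    exact mul_pos (Real.exp_pos _) (pow_pos (Real.sin_pos_of_pos_of_lt_pi hx.1 hx.2) m)
  · exact Real.pi_pos

/-- `|N κ - κ * (S/(m+2))| ≤ κ^2 * S` for `0 < κ ≤ 1`. -/
private lemma aux_N_est (m : ℕ) (κ : ℝ) (hκ : 0 < κ) (hκ1 : κ ≤ 1) :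
    |(∫ θ in (0:ℝ)..π, Real.cos θ * Real.exp (κ * Real.cos θ) * Real.sin θ ^ m)
      - κ * ((∫ θ in (0:ℝ)..π, Real.sin θ ^ m) / (m + 2))|
    ≤ κ ^ 2 * ∫ θ in (0:ℝ)..π, Real.sin θ ^ m := by
  set S := ∫ θ in (0:ℝ)..π, Real.sin θ ^ m with hSdef
  set A : ℝ → ℝ := fun θ =>
    Real.cos θ * (Real.exp (κ * Real.cos θ) - 1 - κ * Real.cos θ) * Real.sin θ ^ m with hAdef
  have hAc : Continuous A := by fun_prop
  have hsplit : (∫ θ in (0:ℝ)..π, Real.cos θ * Real.exp (κ * Real.cos θ) * Real.sin θ ^ m)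
      = (∫ θ in (0:ℝ)..π, A θ) + ((∫ θ in (0:ℝ)..π, Real.cos θ * Real.sin θ ^ m)
        + κ * ∫ θ in (0:ℝ)..π, Real.cos θ ^ 2 * Real.sin θ ^ m) := by
    rw [← intervalIntegral.integral_const_mul, ← intervalIntegral.integral_add
        ((by fun_prop : Continuous fun θ : ℝ => Real.cos θ * Real.sin θ ^ m).intervalIntegrable 0 π)
        ((by fun_prop : Continuous fun θ : ℝ =>
          κ * (Real.cos θ ^ 2 * Real.sin θ ^ m)).intervalIntegrable 0 π),
      ← intervalIntegral.integral_add (hAc.intervalIntegrable 0 π)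
        ((by fun_prop : Continuous fun θ : ℝ => Real.cos θ * Real.sin θ ^ m
          + κ * (Real.cos θ ^ 2 * Real.sin θ ^ m)).intervalIntegrable 0 π)]
    apply intervalIntegral.integral_congr
    intro x _
    simp only [hAdef]
    ring
  rw [hsplit, aux_cos_sin m, aux_cos_sq_sin m]
  simp only [zero_add, ← hSdef, add_sub_cancel_right]
  calc |∫ θ in (0:ℝ)..π, A θ| ≤ ∫ θ in (0:ℝ)..π, |A θ| := by
        simpa [Real.norm_eq_abs] using
          intervalIntegral.norm_integral_le_integral_norm (μ := volume) (f := A) Real.pi_pos.le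
    _ ≤ ∫ θ in (0:ℝ)..π, κ ^ 2 * Real.sin θ ^ m := by
        apply intervalIntegral.integral_mono_on Real.pi_pos.le
          (hAc.abs.intervalIntegrable 0 π)
          ((by fun_prop : Continuous fun θ : ℝ => κ ^ 2 * Real.sin θ ^ m).intervalIntegrable 0 π)
        intro x hx
        have hs : (0:ℝ) ≤ Real.sin x := Real.sin_nonneg_of_nonneg_of_le_pi hx.1 hx.2
        have hx1 : |κ * Real.cos x| ≤ 1 := by
          rw [abs_mul, abs_of_pos hκ]
          calc κ * |Real.cos x| ≤ κ * 1 :=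
                mul_le_mul_of_nonneg_left (Real.abs_cos_le_one x) hκ.le
            _ ≤ 1 := by linarith
        have he : |Real.exp (κ * Real.cos x) - 1 - κ * Real.cos x| ≤ (κ * Real.cos x) ^ 2 :=
          Real.abs_exp_sub_one_sub_id_le hx1
        have hsq : (κ * Real.cos x) ^ 2 ≤ κ ^ 2 := by
          rw [mul_pow]
          nlinarith [Real.cos_sq_le_one x, sq_nonneg κ]
        calc |A x| = |Real.cos x| * |Real.exp (κ * Real.cos x) - 1 - κ * Real.cos x|
              * |Real.sin x ^ m| := by simp [hAdef, abs_mul]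
          _ ≤ 1 * (κ * Real.cos x) ^ 2 * Real.sin x ^ m := by
              apply mul_le_mul
              · exact mul_le_mul (Real.abs_cos_le_one x) he (abs_nonneg _) zero_le_one
              · rw [abs_of_nonneg (pow_nonneg hs m)]
              · exact abs_nonneg _
              · positivity
          _ ≤ κ ^ 2 * Real.sin x ^ m := by
              rw [one_mul]
              exact mul_le_mul_of_nonneg_right hsq (pow_nonneg hs m)
    _ = κ ^ 2 * S := intervalIntegral.integral_const_mul _ _

/-- `|D κ - S| ≤ 2 κ * S` for `0 < κ ≤ 1`. -/
private lemma aux_D_est (m : ℕ) (κ : ℝ) (hκ : 0 < κ) (hκ1 : κ ≤ 1) :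
    |(∫ θ in (0:ℝ)..π, Real.exp (κ * Real.cos θ) * Real.sin θ ^ m)
      - ∫ θ in (0:ℝ)..π, Real.sin θ ^ m|
    ≤ 2 * κ * ∫ θ in (0:ℝ)..π, Real.sin θ ^ m := by
  set A : ℝ → ℝ := fun θ => (Real.exp (κ * Real.cos θ) - 1) * Real.sin θ ^ m with hAdef
  have hAc : Continuous A := by fun_prop
  have hsplit : (∫ θ in (0:ℝ)..π, Real.exp (κ * Real.cos θ) * Real.sin θ ^ m)
      - (∫ θ in (0:ℝ)..π, Real.sin θ ^ m) = ∫ θ in (0:ℝ)..π, A θ := by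
    rw [← intervalIntegral.integral_sub
        ((by fun_prop : Continuous fun θ : ℝ =>
          Real.exp (κ * Real.cos θ) * Real.sin θ ^ m).intervalIntegrable 0 π)
        ((by fun_prop : Continuous fun θ : ℝ => Real.sin θ ^ m).intervalIntegrable 0 π)]
    apply intervalIntegral.integral_congr
    intro x _
    simp only [hAdef]; ring
  rw [hsplit]
  calc |∫ θ in (0:ℝ)..π, A θ| ≤ ∫ θ in (0:ℝ)..π, |A θ| := by
        simpa [Real.norm_eq_abs] using
          intervalIntegral.norm_integral_le_integral_norm (μ := volume) (f := A) Real.pi_pos.le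
    _ ≤ ∫ θ in (0:ℝ)..π, 2 * κ * Real.sin θ ^ m := by
        apply intervalIntegral.integral_mono_on Real.pi_pos.le
          (hAc.abs.intervalIntegrable 0 π)
          ((by fun_prop : Continuous fun θ : ℝ => 2 * κ * Real.sin θ ^ m).intervalIntegrable 0 π)
        intro x hx
        have hs : (0:ℝ) ≤ Real.sin x := Real.sin_nonneg_of_nonneg_of_le_pi hx.1 hx.2
        have hx1 : |κ * Real.cos x| ≤ 1 := by
          rw [abs_mul, abs_of_pos hκ]
          calc κ * |Real.cos x| ≤ κ * 1 :=
                mul_le_mul_of_nonneg_left (Real.abs_cos_le_one x) hκ.le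
            _ ≤ 1 := by linarith
        have he : |Real.exp (κ * Real.cos x) - 1| ≤ 2 * |κ * Real.cos x| :=
          Real.abs_exp_sub_one_le hx1
        have he2 : |Real.exp (κ * Real.cos x) - 1| ≤ 2 * κ := by
          refine he.trans ?_
          rw [abs_mul, abs_of_pos hκ]
          nlinarith [Real.abs_cos_le_one x]
        calc |A x| = |Real.exp (κ * Real.cos x) - 1| * |Real.sin x ^ m| := by
              simp [hAdef, abs_mul]
          _ ≤ 2 * κ * Real.sin x ^ m := by
              rw [abs_of_nonneg (pow_nonneg hs m)]
              exact mul_le_mul_of_nonneg_right he2 (pow_nonneg hs m)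
    _ = 2 * κ * ∫ θ in (0:ℝ)..π, Real.sin θ ^ m := intervalIntegral.integral_const_mul _ _



private lemma aux_abs_orderParam (n : ℕ) (κ : ℝ) : |orderParam n κ| ≤ 1 := by
  set m := n - 2
  have hD := aux_D_pos m κ
  rw [orderParam, abs_div, abs_of_pos hD, div_le_one hD]
  calc |∫ θ in (0:ℝ)..π, Real.cos θ * Real.exp (κ * Real.cos θ) * Real.sin θ ^ m|
      ≤ ∫ θ in (0:ℝ)..π, |Real.cos θ * Real.exp (κ * Real.cos θ) * Real.sin θ ^ m| := by
        simpa only [Real.norm_eq_abs] using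
          intervalIntegral.norm_integral_le_integral_norm
            (μ := volume) (f := fun θ : ℝ =>
              Real.cos θ * Real.exp (κ * Real.cos θ) * Real.sin θ ^ m) Real.pi_pos.le
    _ ≤ ∫ θ in (0:ℝ)..π, Real.exp (κ * Real.cos θ) * Real.sin θ ^ m := by
        apply intervalIntegral.integral_mono_on Real.pi_pos.le
          ((by fun_prop : Continuous fun θ : ℝ =>
            Real.cos θ * Real.exp (κ * Real.cos θ) * Real.sin θ ^ m).abs.intervalIntegrable 0 π)
          ((by fun_prop : Continuous fun θ : ℝ =>
            Real.exp (κ * Real.cos θ) * Real.sin θ ^ m).intervalIntegrable 0 π)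
        intro x hx
        have hs : (0:ℝ) ≤ Real.sin x := Real.sin_nonneg_of_nonneg_of_le_pi hx.1 hx.2
        rw [abs_mul, abs_mul, abs_of_pos (Real.exp_pos _), abs_of_nonneg (pow_nonneg hs m)]
        calc |Real.cos x| * Real.exp (κ * Real.cos x) * Real.sin x ^ m
            ≤ 1 * Real.exp (κ * Real.cos x) * Real.sin x ^ m := by
              apply mul_le_mul_of_nonneg_right _ (pow_nonneg hs m)
              exact mul_le_mul_of_nonneg_right (Real.abs_cos_le_one x) (Real.exp_pos _).le
          _ = Real.exp (κ * Real.cos x) * Real.sin x ^ m := by ring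

/-- `c(κ)/σ(κ) → 1/ρ_c` as `κ → 0⁺` and `c(κ)/σ(κ) → 0` as `κ → κmax⁻`. -/
theorem orderParam_div_sigma_limits (n : ℕ) (hn : 2 ≤ n)
    (h σ : ℝ → ℝ) (κmax : EReal) (hκmax : 0 < κmax)
    (hcont : ContinuousOn h (Set.Ici 0)) (hmono : StrictMonoOn h (Set.Ici 0))
    (h0 : h 0 = 0)
    (hrange : ∀ r : ℝ, 0 ≤ r → 0 ≤ h r ∧ (h r : EReal) < κmax)
    (hsurj : ∀ κ : ℝ, 0 ≤ κ → (κ : EReal) < κmax → ∃ r, 0 ≤ r ∧ h r = κ)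
    (hσ : ∀ r : ℝ, 0 ≤ r → σ (h r) = r)
    (L : ℝ) (hLpos : 0 < L)
    (hL : Tendsto (fun r : ℝ => h r / r) (nhdsWithin 0 (Set.Ioi 0)) (nhds L))
    (ρc : ℝ) (hρc : ρc = n / L) :
    Tendsto (fun κ : ℝ => orderParam n κ / σ κ) (nhdsWithin 0 (Set.Ioi 0))
      (nhds (1 / ρc)) ∧
    Tendsto (fun κ : ℝ => orderParam n κ / σ κ)
      (Filter.comap (fun κ : ℝ => (κ : EReal)) (nhdsWithin κmax (Set.Iio κmax)))
      (nhds 0) := by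
  set m := n - 2 with hm
  set S : ℝ := ∫ θ in (0:ℝ)..π, Real.sin θ ^ m with hSdef
  set N : ℝ → ℝ := fun κ =>
    ∫ θ in (0:ℝ)..π, Real.cos θ * Real.exp (κ * Real.cos θ) * Real.sin θ ^ m with hNdef
  set D : ℝ → ℝ := fun κ =>
    ∫ θ in (0:ℝ)..π, Real.exp (κ * Real.cos θ) * Real.sin θ ^ m with hDdef
  have hS : 0 < S := aux_S_pos m
  have hmn : (m : ℝ) + 2 = n := by
    have h2 : m + 2 = n := Nat.sub_add_cancel hn
    exact_mod_cast h2
  -- eventually membership in (0,1]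
  have hIoo : Set.Ioo (0:ℝ) 1 ∈ nhdsWithin (0:ℝ) (Set.Ioi 0) :=
    Ioo_mem_nhdsGT_of_mem ⟨le_refl 0, one_pos⟩
  constructor
  · -- limit at 0⁺
    -- N κ / κ → S/(m+2)
    have hNq : Tendsto (fun κ => N κ / κ) (nhdsWithin 0 (Set.Ioi 0)) (nhds (S / (m + 2))) := by
      have hz : Tendsto (fun κ : ℝ => N κ / κ - S / (m + 2)) (nhdsWithin 0 (Set.Ioi 0))
          (nhds 0) := by
        have hb : ∀ᶠ κ in nhdsWithin (0:ℝ) (Set.Ioi 0),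
            ‖N κ / κ - S / (m + 2)‖ ≤ κ * S := by
          filter_upwards [hIoo] with κ hκ
          have hκ0 : (0:ℝ) < κ := hκ.1
          have hest := aux_N_est m κ hκ0 hκ.2.le
          have heq3 : N κ / κ - S / (m + 2) = (N κ - κ * (S / (m + 2))) / κ := by
            rw [sub_div, mul_div_cancel_left₀ _ hκ0.ne']
          rw [Real.norm_eq_abs, heq3, abs_div, abs_of_pos hκ0, div_le_iff₀ hκ0]
          calc |N κ - κ * (S / (m + 2))| ≤ κ ^ 2 * S := hest
            _ = κ * S * κ := by ring
        have hg : Tendsto (fun κ : ℝ => κ * S) (nhdsWithin 0 (Set.Ioi 0)) (nhds 0) := by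
          have : Tendsto (fun κ : ℝ => κ * S) (nhds 0) (nhds (0 * S)) :=
            (continuous_id.mul continuous_const).tendsto 0
          simpa using this.mono_left nhdsWithin_le_nhds
        exact squeeze_zero_norm' hb hg
      have := hz.add_const (S / (m + 2))
      simpa using this
    -- D κ → S
    have hDq : Tendsto D (nhdsWithin 0 (Set.Ioi 0)) (nhds S) := by
      have hz : Tendsto (fun κ : ℝ => D κ - S) (nhdsWithin 0 (Set.Ioi 0)) (nhds 0) := by
        have hb : ∀ᶠ κ in nhdsWithin (0:ℝ) (Set.Ioi 0), ‖D κ - S‖ ≤ 2 * κ * S := by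
          filter_upwards [hIoo] with κ hκ
          rw [Real.norm_eq_abs]
          exact aux_D_est m κ hκ.1 hκ.2.le
        have hg : Tendsto (fun κ : ℝ => 2 * κ * S) (nhdsWithin 0 (Set.Ioi 0)) (nhds 0) := by
          have : Tendsto (fun κ : ℝ => 2 * κ * S) (nhds 0) (nhds (2 * 0 * S)) :=
            (continuous_const.mul continuous_id |>.mul continuous_const).tendsto 0
          simpa using this.mono_left nhdsWithin_le_nhds
        exact squeeze_zero_norm' hb hg
      have := hz.add_const S
      simpa using this
    -- orderParam n κ / κ → 1/(m+2)
    have hc : Tendsto (fun κ => orderParam n κ / κ) (nhdsWithin 0 (Set.Ioi 0))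
        (nhds (1 / ((m:ℝ) + 2))) := by
      have hdiv := hNq.div hDq hS.ne'
      have hval : S / ((m:ℝ) + 2) / S = 1 / ((m:ℝ) + 2) := by
        rw [div_div, mul_comm ((m:ℝ)+2) S, ← div_div, div_self hS.ne']
      rw [hval] at hdiv
      refine hdiv.congr fun κ => ?_
      simp only [Pi.div_apply]
      rw [div_right_comm]
      rfl
    -- σ tends to 0 within (0,∞)
    have hEv : ∀ ε : ℝ, 0 < ε → ∀ᶠ κ in nhdsWithin (0:ℝ) (Set.Ioi 0),
        0 < σ κ ∧ σ κ < ε ∧ h (σ κ) = κ := by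
      intro ε hε
      have hhε : 0 < h ε := by
        rw [← h0]
        exact hmono (Set.mem_Ici.2 le_rfl) (Set.mem_Ici.2 hε.le) hε
      filter_upwards [Ioo_mem_nhdsGT_of_mem (Set.mem_Ico.2 ⟨le_refl (0:ℝ), hhε⟩)]
        with κ hκ
      have hκ0 : (0:ℝ) < κ := hκ.1
      have hκmax' : (κ : EReal) < κmax :=
        lt_trans (by exact_mod_cast hκ.2) (hrange ε hε.le).2
      obtain ⟨r, hr0, hrκ⟩ := hsurj κ hκ0.le hκmax'
      have hσκ : σ κ = r := by rw [← hrκ, hσ r hr0]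
      have hrε : r < ε :=
        (hmono.lt_iff_lt (Set.mem_Ici.2 hr0) (Set.mem_Ici.2 hε.le)).1
          (by rw [hrκ]; exact hκ.2)
      have hrpos : 0 < r :=
        (hmono.lt_iff_lt (Set.mem_Ici.2 le_rfl) (Set.mem_Ici.2 hr0)).1
          (by rw [h0, hrκ]; exact hκ0)
      exact ⟨hσκ ▸ hrpos, hσκ ▸ hrε, by rw [hσκ, hrκ]⟩
    have hσ0 : Tendsto σ (nhdsWithin 0 (Set.Ioi 0)) (nhdsWithin 0 (Set.Ioi 0)) := by
      rw [tendsto_nhdsWithin_iff]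
      constructor
      · rw [Metric.tendsto_nhds]
        intro ε hε
        filter_upwards [hEv ε hε] with κ hκ
        rw [Real.dist_eq, sub_zero, abs_of_pos hκ.1]
        exact hκ.2.1
      · filter_upwards [hEv 1 one_pos] with κ hκ using hκ.1
    -- κ / σ κ → L
    have hrat : Tendsto (fun κ => κ / σ κ) (nhdsWithin 0 (Set.Ioi 0)) (nhds L) := by
      have := hL.comp hσ0
      apply this.congr'
      filter_upwards [hEv 1 one_pos] with κ hκ
      simp only [Function.comp_apply, hκ.2.2]
    -- assemble
    have hmul := hc.mul hrat
    have heq2 : ∀ᶠ κ in nhdsWithin (0:ℝ) (Set.Ioi 0),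
        orderParam n κ / κ * (κ / σ κ) = orderParam n κ / σ κ := by
      filter_upwards [hIoo] with κ hκ
      rw [div_mul_div_comm, mul_comm κ (σ κ), mul_div_mul_right _ _ hκ.1.ne']
    have hfin := hmul.congr' heq2
    have hval : 1 / ((m:ℝ) + 2) * L = 1 / ρc := by
      rw [hρc, hmn, one_div_div]
      have hn0 : (n:ℝ) ≠ 0 := by
        have : 0 < n := lt_of_lt_of_le two_pos hn
        positivity
      rw [one_div_mul_eq_div]
    rwa [hval] at hfin
  · -- limit at κmax⁻
    set F := Filter.comap (fun κ : ℝ => (κ : EReal)) (nhdsWithin κmax (Set.Iio κmax)) with hF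
    have hσtop : Tendsto σ F atTop := by
      rw [tendsto_atTop]
      intro b
      set M := max b 0 with hM
      have hM0 : 0 ≤ M := le_max_right _ _
      have hhM : (h M : EReal) < κmax := (hrange M hM0).2
      have hmem : Set.Ioo ((h M : ℝ) : EReal) κmax ∈ nhdsWithin κmax (Set.Iio κmax) :=
        Ioo_mem_nhdsLT_of_mem (Set.mem_Ioc.2 ⟨hhM, le_refl _⟩)
      filter_upwards [Filter.preimage_mem_comap hmem] with κ hκ
      have hκhM : h M < κ :=
        EReal.coe_lt_coe_iff.1 (show ((h M : ℝ) : EReal) < ((κ : ℝ) : EReal) from hκ.1)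
      have hκ0 : 0 ≤ κ := le_trans (hrange M hM0).1 hκhM.le
      obtain ⟨r, hr0, hrκ⟩ := hsurj κ hκ0 hκ.2
      have hσκ : σ κ = r := by rw [← hrκ, hσ r hr0]
      have hMr : M < r :=
        (hmono.lt_iff_lt (Set.mem_Ici.2 hM0) (Set.mem_Ici.2 hr0)).1
          (by rw [hrκ]; exact hκhM)
      rw [hσκ]
      exact le_trans (le_max_left b 0) hMr.le
    have hinv : Tendsto (fun κ => 1 / σ κ) F (nhds 0) := by
      simpa [one_div, Function.comp_def] using tendsto_inv_atTop_zero.comp hσtop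
    apply squeeze_zero_norm' _ hinv
    filter_upwards [hσtop.eventually_ge_atTop 1] with κ hκ1
    have hσpos : 0 < σ κ := lt_of_lt_of_le one_pos hκ1
    rw [Real.norm_eq_abs, abs_div, abs_of_pos hσpos]
    gcongr
    exact aux_abs_orderParam n κ
end

section
/- Assume in addition that the function κ ↦ σ(κ)/c(κ) is strictly increasing on (0, κ_max). Then for every ρ with 0 < ρ ≤ ρ_c the compatibility equation σ(κ) = ρ c(κ) has no solution κ ∈ (0, κ_max), while for every ρ > ρ_c it has exactly one solution κ ∈ (0, κ_max). -/
open MeasureTheory Real Filter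

section AuxVonMises
open intervalIntegral


noncomputable def Dfun (m : ℕ) (κ : ℝ) : ℝ := ∫ θ in (0:ℝ)..π, Real.exp (κ * Real.cos θ) * Real.sin θ ^ m
noncomputable def Nfun (m : ℕ) (κ : ℝ) : ℝ := ∫ θ in (0:ℝ)..π, Real.cos θ * Real.exp (κ * Real.cos θ) * Real.sin θ ^ m

lemma Dii (m : ℕ) (κ : ℝ) (a b : ℝ) :
    IntervalIntegrable (fun θ => Real.exp (κ * Real.cos θ) * Real.sin θ ^ m) volume a b :=
  Continuous.intervalIntegrable (by fun_prop) a b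

lemma Nii (m : ℕ) (κ : ℝ) (a b : ℝ) :
    IntervalIntegrable (fun θ => Real.cos θ * Real.exp (κ * Real.cos θ) * Real.sin θ ^ m) volume a b :=
  Continuous.intervalIntegrable (by fun_prop) a b

lemma Dpos (m : ℕ) (κ : ℝ) : 0 < Dfun m κ := by
  apply intervalIntegral_pos_of_pos_on (Dii m κ 0 π)
  · intro x hx
    exact mul_pos (exp_pos _) (pow_pos (sin_pos_of_pos_of_lt_pi hx.1 hx.2) m)
  · exact pi_pos

lemma Dcont (m : ℕ) : Continuous (Dfun m) := by
  apply intervalIntegral.continuous_parametric_intervalIntegral_of_continuous'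
    (f := fun κ θ => Real.exp (κ * Real.cos θ) * Real.sin θ ^ m) (μ := volume)
  fun_prop

lemma Ncont (m : ℕ) : Continuous (Nfun m) := by
  apply intervalIntegral.continuous_parametric_intervalIntegral_of_continuous'
    (f := fun κ θ => Real.cos θ * Real.exp (κ * Real.cos θ) * Real.sin θ ^ m) (μ := volume)
  fun_prop

lemma NleD (m : ℕ) (κ : ℝ) : Nfun m κ ≤ Dfun m κ := by
  apply intervalIntegral.integral_mono_on pi_pos.le (Nii m κ 0 π) (Dii m κ 0 π)
  intro θ hθ
  have hs : 0 ≤ Real.sin θ := sin_nonneg_of_nonneg_of_le_pi hθ.1 hθ.2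
  have : Real.cos θ * Real.exp (κ * Real.cos θ) ≤ Real.exp (κ * Real.cos θ) :=
    mul_le_of_le_one_left (exp_pos _).le (cos_le_one θ)
  exact mul_le_mul_of_nonneg_right this (pow_nonneg hs m)

lemma N0 (m : ℕ) : Nfun m 0 = 0 := by
  have h := integral_sin_pow_mul_cos_pow_odd (a := 0) (b := π) m 0
  simp only [Real.sin_pi, Real.sin_zero, intervalIntegral.integral_same, mul_one, pow_one,
    pow_zero] at h
  rw [Nfun]
  rw [show (fun θ => Real.cos θ * Real.exp (0 * Real.cos θ) * Real.sin θ ^ m)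
      = fun θ => Real.sin θ ^ m * Real.cos θ ^ 1 from funext fun θ => by
    simp [Real.exp_zero]; ring]
  simpa using h


lemma wallis_aux (m : ℕ) :
    ∫ θ in (0:ℝ)..π, Real.cos θ ^ 2 * Real.sin θ ^ m
      = (∫ θ in (0:ℝ)..π, Real.sin θ ^ m) / (m + 2) := by
  have h1 := integral_sin_pow (a := 0) (b := π) m
  simp only [Real.sin_pi, Real.sin_zero, zero_pow (Nat.succ_ne_zero m), zero_mul, sub_zero,
    zero_div, zero_add] at h1
  have h2 : (fun θ => Real.cos θ ^ 2 * Real.sin θ ^ m)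
      = fun θ => Real.sin θ ^ m - Real.sin θ ^ (m + 2) := by
    funext θ
    rw [Real.cos_sq']
    ring
  rw [h2, intervalIntegral.integral_sub (Continuous.intervalIntegrable (by fun_prop) 0 π)
    (Continuous.intervalIntegrable (by fun_prop) 0 π), h1]
  have hm : ((m : ℝ) + 2) ≠ 0 := by positivity
  field_simp
  ring

lemma Nderiv (m : ℕ) :
    HasDerivAt (Nfun m) (∫ θ in (0:ℝ)..π, Real.cos θ ^ 2 * Real.sin θ ^ m) 0 := by
  have key := intervalIntegral.hasDerivAt_integral_of_dominated_loc_of_deriv_le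
    (F := fun κ θ => Real.cos θ * Real.exp (κ * Real.cos θ) * Real.sin θ ^ m)
    (F' := fun κ θ => Real.cos θ ^ 2 * Real.exp (κ * Real.cos θ) * Real.sin θ ^ m)
    (x₀ := (0:ℝ)) (a := 0) (b := π) (μ := volume) (bound := fun _ => Real.exp 1)
    (s := Metric.ball 0 1) (Metric.ball_mem_nhds 0 one_pos)
    ?_ ?_ ?_ ?_ ?_ ?_
  · have h2 := key.2
    have : (fun θ => Real.cos θ ^ 2 * Real.exp ((0:ℝ) * Real.cos θ) * Real.sin θ ^ m)
        = fun θ => Real.cos θ ^ 2 * Real.sin θ ^ m := by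
      funext θ; simp
    rw [this] at h2
    exact h2
  · filter_upwards with x
    exact (Continuous.aestronglyMeasurable (by fun_prop)).restrict
  · exact Continuous.intervalIntegrable (by fun_prop) 0 π
  · exact (Continuous.aestronglyMeasurable (by fun_prop)).restrict
  · filter_upwards with θ hθ x hx
    have hθ' : θ ∈ Set.Ioc (0:ℝ) π := by rwa [Set.uIoc_of_le pi_pos.le] at hθ
    have hs : 0 ≤ Real.sin θ := Real.sin_nonneg_of_nonneg_of_le_pi hθ'.1.le hθ'.2
    have hb1 : Real.cos θ ^ 2 ≤ 1 := by
      have := Real.neg_one_le_cos θ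
      have := Real.cos_le_one θ
      nlinarith
    have hb2 : Real.exp (x * Real.cos θ) ≤ Real.exp 1 := by
      apply Real.exp_le_exp.2
      have hx1 : |x| < 1 := by simpa [Real.dist_eq] using Metric.mem_ball.1 hx
      calc x * Real.cos θ ≤ |x * Real.cos θ| := le_abs_self _
        _ = |x| * |Real.cos θ| := abs_mul _ _
        _ ≤ 1 * 1 := by
            apply mul_le_mul hx1.le (Real.abs_cos_le_one θ) (abs_nonneg _) zero_le_one
        _ = 1 := one_mul _
    have hb3 : Real.sin θ ^ m ≤ 1 := pow_le_one₀ hs (Real.sin_le_one θ)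
    rw [Real.norm_eq_abs, abs_mul, abs_mul, abs_pow, abs_pow, abs_of_nonneg hs, sq_abs,
      abs_of_pos (Real.exp_pos _)]
    calc Real.cos θ ^ 2 * Real.exp (x * Real.cos θ) * Real.sin θ ^ m
        ≤ 1 * Real.exp 1 * 1 := by
          apply mul_le_mul (mul_le_mul hb1 hb2 (Real.exp_pos _).le zero_le_one) hb3
            (pow_nonneg hs m)
          positivity
      _ = Real.exp 1 := by ring
  · exact intervalIntegrable_const
  · filter_upwards with θ hθ x hx
    have h1 : HasDerivAt (fun κ : ℝ => κ * Real.cos θ) (Real.cos θ) x := hasDerivAt_mul_const _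
    have h2 := h1.exp
    have h3 := (h2.const_mul (Real.cos θ)).mul_const (Real.sin θ ^ m)
    convert h3 using 1
    exacts [rfl, by ring]

lemma Dfun0 (m : ℕ) : Dfun m 0 = ∫ θ in (0:ℝ)..π, Real.sin θ ^ m := by
  unfold Dfun; congr 1; funext θ; simp

lemma ratio_limit (m : ℕ) :
    Tendsto (fun κ => (Nfun m κ / Dfun m κ) / κ) (nhdsWithin 0 (Set.Ioi 0))
      (nhds (1 / (m + 2))) := by
  have hW : (∫ θ in (0:ℝ)..π, Real.cos θ ^ 2 * Real.sin θ ^ m) = Dfun m 0 / (m + 2) := by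
    rw [wallis_aux, Dfun0]
  have hslope : Tendsto (fun κ => Nfun m κ / κ) (nhdsWithin 0 (Set.Ioi 0))
      (nhds (Dfun m 0 / (m + 2))) := by
    have h1 := hasDerivAt_iff_tendsto_slope.1 (Nderiv m)
    rw [hW] at h1
    have h2 : (slope (Nfun m) 0) = fun κ => Nfun m κ / κ := by
      funext κ
      rw [slope_def_field, N0]
      simp [div_eq_mul_inv]
    rw [h2] at h1
    exact h1.mono_left (nhdsWithin_mono 0 (fun x hx => ne_of_gt hx))
  have hD : Tendsto (Dfun m) (nhdsWithin 0 (Set.Ioi 0)) (nhds (Dfun m 0)) :=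
    ((Dcont m).tendsto 0).mono_left nhdsWithin_le_nhds
  have := hslope.div hD (Dpos m 0).ne'
  have hval : Dfun m 0 / (m + 2) / Dfun m 0 = 1 / (m + 2) := by
    rw [div_right_comm, div_self (Dpos m 0).ne']
  rw [hval] at this
  exact this.congr fun κ => by simp only [Pi.div_apply]; rw [div_right_comm]

end AuxVonMises

/-- If `κ ↦ σ(κ)/c(κ)` is strictly increasing on `(0, κmax)`, then for `0 < ρ ≤ ρ_c`
the compatibility equation `σ(κ) = ρ c(κ)` has no solution in `(0, κmax)`, while for
`ρ > ρ_c` it has exactly one. -/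
theorem compatibility_dichotomy (n : ℕ) (hn : 2 ≤ n)
    (h σ : ℝ → ℝ) (κmax : EReal) (hκmax : 0 < κmax)
    (hcont : ContinuousOn h (Set.Ici 0)) (hmono : StrictMonoOn h (Set.Ici 0))
    (h0 : h 0 = 0)
    (hrange : ∀ r : ℝ, 0 ≤ r → 0 ≤ h r ∧ (h r : EReal) < κmax)
    (hsurj : ∀ κ : ℝ, 0 ≤ κ → (κ : EReal) < κmax → ∃ r, 0 ≤ r ∧ h r = κ)
    (hσ : ∀ r : ℝ, 0 ≤ r → σ (h r) = r)
    (L : ℝ) (hLpos : 0 < L)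
    (hL : Tendsto (fun r : ℝ => h r / r) (nhdsWithin 0 (Set.Ioi 0)) (nhds L))
    (ρc : ℝ) (hρc : ρc = n / L)
    (hinc : StrictMonoOn (fun κ : ℝ => σ κ / orderParam n κ)
      {κ : ℝ | 0 < κ ∧ (κ : EReal) < κmax}) :
    (∀ ρ : ℝ, 0 < ρ → ρ ≤ ρc →
      ¬ ∃ κ : ℝ, 0 < κ ∧ (κ : EReal) < κmax ∧ σ κ = ρ * orderParam n κ) ∧
    (∀ ρ : ℝ, ρc < ρ →
      ∃! κ : ℝ, 0 < κ ∧ (κ : EReal) < κmax ∧ σ κ = ρ * orderParam n κ) := by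
  set m : ℕ := n - 2 with hm
  have hc_eq : ∀ κ, orderParam n κ = Nfun m κ / Dfun m κ := fun κ => rfl
  have hnR : (m : ℝ) + 2 = (n : ℝ) := by
    have : m + 2 = n := by omega
    exact_mod_cast this
  have hnpos : (0:ℝ) < n := by
    have : (0:ℕ) < n := by omega
    exact_mod_cast this
  have hρc_pos : 0 < ρc := by rw [hρc]; positivity
  have hc_cont : Continuous (orderParam n) := by
    have : Continuous fun κ => Nfun m κ / Dfun m κ :=
      (Ncont m).div (Dcont m) (fun κ => (Dpos m κ).ne')
    exact this.congr fun κ => (hc_eq κ).symm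
  have hc_le1 : ∀ κ, orderParam n κ ≤ 1 := fun κ => by
    rw [hc_eq]
    exact div_le_one_of_le₀ (NleD m κ) (Dpos m κ).le
  -- c(κ)/κ → 1/n
  have hlimc : Tendsto (fun κ => orderParam n κ / κ) (nhdsWithin 0 (Set.Ioi 0))
      (nhds (1 / (n : ℝ))) := by
    have := ratio_limit m
    rw [hnR] at this
    exact this.congr fun κ => by rw [hc_eq]
  -- h tends to 0 within Ioi 0, staying in Ioi 0
  have hpos_hr : ∀ r : ℝ, 0 < r → 0 < h r := fun r hr => by
    have := hmono Set.self_mem_Ici (Set.mem_Ici.2 hr.le) hr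
    rwa [h0] at this
  have hh0 : Tendsto h (nhdsWithin 0 (Set.Ioi 0)) (nhdsWithin 0 (Set.Ioi 0)) := by
    apply tendsto_nhdsWithin_of_tendsto_nhds_of_eventually_within
    · have h1 : Tendsto h (nhdsWithin 0 (Set.Ici 0)) (nhds 0) := by
        have := (hcont 0 Set.self_mem_Ici).tendsto
        rwa [h0] at this
      exact h1.mono_left (nhdsWithin_mono 0 Set.Ioi_subset_Ici_self)
    · filter_upwards [self_mem_nhdsWithin] with r hr
      exact hpos_hr r hr
  -- key limit: c(h r)/r → 1/ρc
  have hkey : Tendsto (fun r => orderParam n (h r) / r) (nhdsWithin 0 (Set.Ioi 0))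
      (nhds (1 / ρc)) := by
    have comp : Tendsto (fun r => orderParam n (h r) / h r) (nhdsWithin 0 (Set.Ioi 0))
        (nhds (1 / (n : ℝ))) := hlimc.comp hh0
    have hmul := comp.mul hL
    have hval : 1 / (n : ℝ) * L = 1 / ρc := by
      rw [hρc, one_div_div]
      ring
    rw [hval] at hmul
    apply hmul.congr'
    filter_upwards [self_mem_nhdsWithin] with r hr
    have hr0 : r ≠ 0 := ne_of_gt hr
    have hhr0 : h r ≠ 0 := ne_of_gt (hpos_hr r hr)
    field_simp
  -- structure of a solution
  have hsol_struct : ∀ (ρ : ℝ) (κ : ℝ), 0 < ρ → 0 < κ → (κ : EReal) < κmax →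
      σ κ = ρ * orderParam n κ →
      ∃ r, 0 < r ∧ h r = κ ∧ σ κ = r ∧ 0 < orderParam n κ ∧ σ κ / orderParam n κ = ρ := by
    intro ρ κ hρ hκ hκlt heq
    obtain ⟨r, hr0, hrκ⟩ := hsurj κ hκ.le hκlt
    have hσκ : σ κ = r := by rw [← hrκ]; exact hσ r hr0
    have hrpos : 0 < r := by
      rcases hr0.lt_or_eq with h' | h'
      · exact h'
      · exfalso; rw [← h', h0] at hrκ; exact absurd hrκ.symm (ne_of_gt hκ)
    have hcκ : orderParam n κ = r / ρ := by
      have : r = ρ * orderParam n κ := by rw [← hσκ]; exact heq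
      field_simp [ne_of_gt hρ] at this ⊢
      linarith
    have hcpos : 0 < orderParam n κ := hcκ ▸ div_pos hrpos hρ
    refine ⟨r, hrpos, hrκ, hσκ, hcpos, ?_⟩
    rw [heq, mul_div_assoc, div_self hcpos.ne', mul_one]
  -- membership of h r in the domain set
  have hmemS : ∀ r : ℝ, 0 < r → h r ∈ {κ : ℝ | 0 < κ ∧ (κ : EReal) < κmax} := fun r hr =>
    ⟨hpos_hr r hr, (hrange r hr.le).2⟩
  -- limit of g along h r is ρc
  have hglim : Tendsto (fun r => σ (h r) / orderParam n (h r)) (nhdsWithin 0 (Set.Ioi 0))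
      (nhds ρc) := by
    have hinv := hkey.inv₀ (by positivity : (1:ℝ) / ρc ≠ 0)
    rw [one_div, inv_inv] at hinv
    apply hinv.congr'
    filter_upwards [self_mem_nhdsWithin] with r hr
    rw [inv_div, hσ r hr.le]
  -- lower bound: g (h r) ≥ ρc for r > 0
  have hlb : ∀ r : ℝ, 0 < r → ρc ≤ σ (h r) / orderParam n (h r) := by
    intro r hr
    apply le_of_tendsto hglim
    filter_upwards [Ioo_mem_nhdsGT_of_mem ⟨le_refl (0:ℝ), hr⟩] with r' hr'
    exact (hinc (hmemS r' hr'.1) (hmemS r hr)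
      (hmono (Set.mem_Ici.2 hr'.1.le) (Set.mem_Ici.2 hr.le) hr'.2)).le
  constructor
  · -- no solutions for ρ ≤ ρc
    rintro ρ hρ hρle ⟨κ, hκ, hκlt, heq⟩
    obtain ⟨r, hrpos, hrκ, hσκ, hcpos, hgκ⟩ := hsol_struct ρ κ hρ hκ hκlt heq
    have h2pos : 0 < r / 2 := by linarith
    have hlt : h (r / 2) < κ := by
      rw [← hrκ]
      exact hmono (Set.mem_Ici.2 h2pos.le) (Set.mem_Ici.2 hrpos.le) (by linarith)
    have h1 := hinc (hmemS (r / 2) h2pos) ⟨hκ, hκlt⟩ hlt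
    have h2 := hlb (r / 2) h2pos
    simp only at h1
    rw [hgκ] at h1
    linarith
  · -- unique solution for ρ > ρc
    intro ρ hρgt
    have hρpos : 0 < ρ := hρc_pos.trans hρgt
    -- find a small r₁ with ρ * c(h r₁) > r₁
    have hevent : ∀ᶠ r in nhdsWithin 0 (Set.Ioi 0),
        1 / ρ < orderParam n (h r) / r := by
      apply hkey.eventually (lt_mem_nhds _)
      exact one_div_lt_one_div_of_lt hρc_pos hρgt
    obtain ⟨r₁, hr₁m, hr₁gt⟩ :=
      ((eventually_mem_nhdsWithin.and
        (eventually_nhdsWithin_of_eventually_nhds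
          (Filter.Tendsto.eventually_lt_const (by linarith : (0:ℝ) < ρ + 1) tendsto_id))).and
        hevent).exists
    have hr₁pos : 0 < r₁ := hr₁m.1
    have hr₁lt : r₁ < ρ + 1 := hr₁m.2
    have hF1 : r₁ < ρ * orderParam n (h r₁) := by
      rw [div_lt_div_iff₀ hρpos hr₁pos] at hr₁gt
      linarith [mul_comm (orderParam n (h r₁)) ρ]
    set F : ℝ → ℝ := fun r => ρ * orderParam n (h r) - r with hF
    have hFcont : ContinuousOn F (Set.Icc r₁ (ρ + 1)) := by
      apply ContinuousOn.sub
      · exact continuousOn_const.mul (hc_cont.comp_continuousOn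
          (hcont.mono fun x hx => le_trans hr₁pos.le hx.1))
      · exact continuousOn_id
    have hF2 : F (ρ + 1) < 0 := by
      have := hc_le1 (h (ρ + 1))
      simp only [hF]
      nlinarith
    have h0mem : (0:ℝ) ∈ Set.Icc (F (ρ + 1)) (F r₁) := by
      constructor
      · exact hF2.le
      · simp only [hF]; linarith
    obtain ⟨r, hrmem, hFr⟩ := intermediate_value_Icc' hr₁lt.le hFcont h0mem
    have hrpos : 0 < r := lt_of_lt_of_le hr₁pos hrmem.1
    have heq : σ (h r) = ρ * orderParam n (h r) := by
      rw [hσ r hrpos.le]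
      have h1 : ρ * orderParam n (h r) - r = 0 := hFr
      linarith
    refine ⟨h r, ⟨hpos_hr r hrpos, (hrange r hrpos.le).2, heq⟩, ?_⟩
    rintro κ' ⟨hκ'pos, hκ'lt, heq'⟩
    obtain ⟨_, _, _, _, _, hg'⟩ := hsol_struct ρ κ' hρpos hκ'pos hκ'lt heq'
    obtain ⟨_, _, _, _, _, hg⟩ :=
      hsol_struct ρ (h r) hρpos (hpos_hr r hrpos) (hrange r hrpos.le).2 heq
    exact hinc.injOn ⟨hκ'pos, hκ'lt⟩ (hmemS r hrpos) (by show σ κ' / orderParam n κ' = σ (h r) / orderParam n (h r); rw [hg', hg])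
end
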